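/- For every graph G on n vertices and every q > 0, one can delete at most q·n² edges from G to obtain a spanning subgraph all of whose connected components are q-cut-dense. -/

import Mathlib

/-- A graph `G` is `q`-cut-dense if for every partition of its vertex set into two parts
`A, B`, the number of edges between `A` and `B` is at least `q·|A|·|B|`. -/
def CutDense {V : Type} (G : SimpleGraph V) (q : ℝ) : Prop :=
  ∀ A B : Set V, A ∪ B = Set.univ → Disjoint A B →
    q * (A.ncard : ℝ) * (B.ncard : ℝ) ≤
      (Set.ncard {p : V × V | p.1 ∈ A ∧ p.2 ∈ B ∧ G.Adj p.1 p.2} : ℝ)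

open SimpleGraph Set
lemma crossing {V : Type} {G : SimpleGraph V} {A B : Set V} (hd : Disjoint A B) :
    ∀ {a b : V} (p : G.Walk a b), a ∈ A → b ∈ B → (∀ v ∈ p.support, v ∈ A ∪ B) →
    ∃ x y, x ∈ A ∧ y ∈ B ∧ G.Adj x y := by
  intro a b p
  induction p with
  | nil =>
    intro ha hb _
    exact absurd hb (Set.disjoint_left.mp hd ha)
  | cons h p ih =>
    intro ha hb hsupp
    rename_i u v w
    have hv : v ∈ A ∪ B := hsupp v (by simp [SimpleGraph.Walk.support_cons,
      SimpleGraph.Walk.start_mem_support])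
    rcases hv with hv | hv
    · exact ih hv hb (fun x hx => hsupp x (by simp [SimpleGraph.Walk.support_cons, hx]))
    · exact ⟨u, v, ha, hv, h⟩

lemma ncard_prod' {α β : Type} (s : Set α) (t : Set β) :
    (s ×ˢ t).ncard = s.ncard * t.ncard := by
  rw [← Nat.card_coe_set_eq, ← Nat.card_coe_set_eq, ← Nat.card_coe_set_eq, ← Nat.card_prod]
  exact Nat.card_congr (Equiv.Set.prod s t)

/-- the set of ordered pairs of distinct vertices in the same component -/
def pairsConn {V : Type} (G : SimpleGraph V) : Set (V × V) :=
  {p | p.1 ≠ p.2 ∧ G.Reachable p.1 p.2}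

lemma step {V : Type} [Fintype V] (q : ℝ) (hq : 0 < q) (G : SimpleGraph V)
    (hbad : ¬ ∀ c : G.ConnectedComponent, CutDense (G.induce c.supp) q) :
    ∃ G' : SimpleGraph V, G' ≤ G ∧ G'.edgeSet.ncard < G.edgeSet.ncard ∧
      ∃ m : ℝ, 0 ≤ m ∧
        ((G.edgeSet \ G'.edgeSet).ncard : ℝ) ≤ q * m ∧
        ((pairsConn G').ncard : ℝ) + 2 * m ≤ ((pairsConn G).ncard : ℝ) := by
  classical
  push_neg at hbad
  obtain ⟨c, hc⟩ := hbad
  rw [CutDense] at hc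
  push_neg at hc
  obtain ⟨A, B, hAB, hdisj, hcut⟩ := hc
  set A' : Set V := Subtype.val '' A with hA'
  set B' : Set V := Subtype.val '' B with hB'
  have hval : Function.Injective (Subtype.val : c.supp → V) := Subtype.coe_injective
  have hA'B' : A' ∪ B' = c.supp := by
    rw [← Set.image_union, hAB, Set.image_univ, Subtype.range_coe]
  have hdisj' : Disjoint A' B' := Set.disjoint_image_of_injective hval hdisj
  have hA'supp : A' ⊆ c.supp := hA'B' ▸ Set.subset_union_left
  have hB'supp : B' ⊆ c.supp := hA'B' ▸ Set.subset_union_right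
  -- nonemptiness
  have hAne : A.Nonempty := by
    by_contra h
    rw [Set.not_nonempty_iff_eq_empty] at h
    subst h
    simp only [Set.ncard_empty, Nat.cast_zero, mul_zero, zero_mul] at hcut
    exact absurd (Nat.cast_nonneg _) (not_le.mpr hcut)
  have hBne : B.Nonempty := by
    by_contra h
    rw [Set.not_nonempty_iff_eq_empty] at h
    subst h
    simp only [Set.ncard_empty, Nat.cast_zero, mul_zero] at hcut
    exact absurd (Nat.cast_nonneg _) (not_le.mpr hcut)
  -- the new graph
  set G' : SimpleGraph V :=
    { Adj := fun x y => G.Adj x y ∧ ¬(x ∈ A' ∧ y ∈ B') ∧ ¬(x ∈ B' ∧ y ∈ A'),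
      symm := ⟨by
        rintro x y ⟨h1, h2, h3⟩
        exact ⟨h1.symm, fun ⟨p, r⟩ => h3 ⟨r, p⟩, fun ⟨p, r⟩ => h2 ⟨r, p⟩⟩⟩,
      loopless := ⟨fun x h => G.loopless.irrefl x h.1⟩ } with hG'
  have hle : G' ≤ G := by intro u v h; exact h.1
  -- supp of walks
  have hsuppwalk : ∀ (G₂ : SimpleGraph V), G₂ ≤ G → ∀ {a b : V} (p : G₂.Walk a b),
      a ∈ c.supp → ∀ v ∈ p.support, v ∈ A' ∪ B' := by
    intro G₂ hle₂ a b p ha v hv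
    rw [hA'B']
    have : G₂.Reachable a v := ⟨p.takeUntil v hv⟩
    have hr : G.Reachable a v := this.mono hle₂
    rw [SimpleGraph.ConnectedComponent.mem_supp_iff] at ha ⊢
    rw [← ha]
    exact (SimpleGraph.ConnectedComponent.sound hr).symm
  -- reachability of elements of supp
  have hreach : ∀ x ∈ c.supp, ∀ y ∈ c.supp, G.Reachable x y := by
    intro x hx y hy
    rw [SimpleGraph.ConnectedComponent.mem_supp_iff] at hx hy
    exact SimpleGraph.ConnectedComponent.exact (hx.trans hy.symm)
  -- strict edge decrease
  obtain ⟨a, haA⟩ := hAne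
  obtain ⟨b, hbB⟩ := hBne
  have haA' : (a : V) ∈ A' := ⟨a, haA, rfl⟩
  have hbB' : (b : V) ∈ B' := ⟨b, hbB, rfl⟩
  obtain ⟨w⟩ := hreach a (hA'supp haA') b (hB'supp hbB')
  obtain ⟨x, y, hx, hy, hxy⟩ :=
    crossing hdisj' w haA' hbB' (hsuppwalk G le_rfl w (hA'supp haA'))
  have hxyG' : ¬ G'.Adj x y := fun h => h.2.1 ⟨hx, hy⟩
  have hssub : G'.edgeSet ⊂ G.edgeSet := by
    constructor
    · exact SimpleGraph.edgeSet_mono hle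
    · intro hsub
      exact hxyG' ((SimpleGraph.mem_edgeSet G').mp (hsub ((SimpleGraph.mem_edgeSet G).mpr hxy)))
  have hlt : G'.edgeSet.ncard < G.edgeSet.ncard :=
    Set.ncard_lt_ncard hssub (Set.toFinite _)
  -- the cross set counting
  set SV : Set (V × V) := {p : V × V | p.1 ∈ A' ∧ p.2 ∈ B' ∧ G.Adj p.1 p.2} with hSV
  have hcount : (SV.ncard : ℝ) < q * (A.ncard : ℝ) * (B.ncard : ℝ) := by
    have himg : SV = (Prod.map (Subtype.val) (Subtype.val)) ''
        {p : c.supp × c.supp | p.1 ∈ A ∧ p.2 ∈ B ∧ (G.induce c.supp).Adj p.1 p.2} := by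
      ext ⟨x, y⟩
      constructor
      · rintro ⟨⟨x', hx', rfl⟩, ⟨y', hy', rfl⟩, hadj⟩
        exact ⟨(x', y'), ⟨hx', hy', by simpa using hadj⟩, rfl⟩
      · rintro ⟨⟨x', y'⟩, ⟨hx', hy', hadj⟩, heq⟩
        obtain ⟨rfl, rfl⟩ := Prod.ext_iff.mp heq
        exact ⟨⟨x', hx', rfl⟩, ⟨y', hy', rfl⟩, by simpa using hadj⟩
    rw [himg, Set.ncard_image_of_injective _ (hval.prodMap hval)]
    exact hcut
  refine ⟨G', hle, hlt, (A.ncard : ℝ) * (B.ncard : ℝ), by positivity, ?_, ?_⟩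
  · -- deleted edges bound
    have hsub : G.edgeSet \ G'.edgeSet ⊆ (fun p : V × V => s(p.1, p.2)) '' SV := by
      intro e he
      induction e with
      | _ u v =>
        obtain ⟨he1, he2⟩ := he
        rw [SimpleGraph.mem_edgeSet] at he1 he2
        have : (u ∈ A' ∧ v ∈ B') ∨ (u ∈ B' ∧ v ∈ A') := by
          by_contra h
          push_neg at h
          exact he2 ⟨he1, fun ⟨p, r⟩ => h.1 p r, fun ⟨p, r⟩ => h.2 p r⟩
        rcases this with ⟨h1, h2⟩ | ⟨h1, h2⟩
        · exact ⟨(u, v), ⟨h1, h2, he1⟩, rfl⟩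
        · exact ⟨(v, u), ⟨h2, h1, he1.symm⟩, Sym2.eq_swap⟩
    calc ((G.edgeSet \ G'.edgeSet).ncard : ℝ)
        ≤ (((fun p : V × V => s(p.1, p.2)) '' SV).ncard : ℝ) := by
          exact_mod_cast Set.ncard_le_ncard hsub (Set.toFinite _)
      _ ≤ (SV.ncard : ℝ) := by exact_mod_cast Set.ncard_image_le (Set.toFinite _)
      _ ≤ q * ((A.ncard : ℝ) * (B.ncard : ℝ)) := by
          rw [← mul_assoc]; exact hcount.le
  · -- pairs decrease
    set T : Set (V × V) := (A' ×ˢ B') ∪ (B' ×ˢ A') with hT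
    have hTsub : T ⊆ pairsConn G := by
      rintro ⟨x, y⟩ (⟨hx, hy⟩ | ⟨hx, hy⟩)
      · exact ⟨fun h => Set.disjoint_left.mp hdisj' (h ▸ hx) hy,
          hreach x (hA'supp hx) y (hB'supp hy)⟩
      · exact ⟨fun h => Set.disjoint_left.mp hdisj' hy (h ▸ hx),
          hreach x (hB'supp hx) y (hA'supp hy)⟩
    have hnoreach : ∀ x ∈ A', ∀ y ∈ B', ¬ G'.Reachable x y := by
      rintro x hx y hy ⟨p⟩
      obtain ⟨u, v, hu, hv, huv⟩ :=
        crossing hdisj' p hx hy (hsuppwalk G' hle p (hA'supp hx))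
      exact huv.2.1 ⟨hu, hv⟩
    have hTdisj : Disjoint T (pairsConn G') := by
      rw [Set.disjoint_left]
      rintro ⟨x, y⟩ (⟨hx, hy⟩ | ⟨hx, hy⟩) ⟨_, hr⟩
      · exact hnoreach x hx y hy hr
      · exact hnoreach y hy x hx hr.symm
    have hUsub : pairsConn G' ∪ T ⊆ pairsConn G := by
      rintro p (⟨h1, h2⟩ | hp)
      · exact ⟨h1, h2.mono hle⟩
      · exact hTsub hp
    have hTcard : T.ncard = A.ncard * B.ncard + B.ncard * A.ncard := by
      rw [hT, Set.ncard_union_eq ?_ (Set.toFinite _) (Set.toFinite _),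
        ncard_prod', ncard_prod', hA', hB',
        Set.ncard_image_of_injective _ hval, Set.ncard_image_of_injective _ hval]
      rw [Set.disjoint_left]
      rintro ⟨x, y⟩ ⟨hx, _⟩ ⟨hx', _⟩
      exact Set.disjoint_left.mp hdisj' hx hx'
    have hkey : (pairsConn G').ncard + T.ncard ≤ (pairsConn G).ncard := by
      rw [← Set.ncard_union_eq hTdisj.symm (Set.toFinite _) (Set.toFinite _)]
      exact Set.ncard_le_ncard hUsub (Set.toFinite _)
    have := hkey
    rw [hTcard] at this
    have h2 : ((pairsConn G').ncard : ℝ) + (A.ncard * B.ncard + B.ncard * A.ncard : ℕ)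
        ≤ ((pairsConn G).ncard : ℝ) := by exact_mod_cast this
    push_cast at h2
    nlinarith [h2]

lemma main_ind {V : Type} [Fintype V] (q : ℝ) (hq : 0 < q) :
    ∀ (n : ℕ) (G : SimpleGraph V), G.edgeSet.ncard ≤ n →
      ∃ H : SimpleGraph V, H ≤ G ∧
        ((G.edgeSet \ H.edgeSet).ncard : ℝ) ≤ q * ((pairsConn G).ncard : ℝ) ∧
        ∀ c : H.ConnectedComponent, CutDense (H.induce c.supp) q := by
  intro n
  induction n with
  | zero =>
    intro G hG
    by_cases hgood : ∀ c : G.ConnectedComponent, CutDense (G.induce c.supp) q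
    · exact ⟨G, le_rfl, by simp [Set.ncard_empty]; positivity, hgood⟩
    · obtain ⟨G', _, hlt, _⟩ := step q hq G hgood
      omega
  | succ n ih =>
    intro G hG
    by_cases hgood : ∀ c : G.ConnectedComponent, CutDense (G.induce c.supp) q
    · exact ⟨G, le_rfl, by simp [Set.ncard_empty]; positivity, hgood⟩
    · obtain ⟨G', hle, hlt, m, hm0, hdel, hpairs⟩ := step q hq G hgood
      obtain ⟨H, hHle, hHdel, hHcomp⟩ := ih G' (by omega)
      refine ⟨H, hHle.trans hle, ?_, hHcomp⟩
      have hsplit : (G.edgeSet \ H.edgeSet).ncard =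
          (G.edgeSet \ G'.edgeSet).ncard + (G'.edgeSet \ H.edgeSet).ncard := by
        rw [← Set.ncard_union_eq ?_ (Set.toFinite _) (Set.toFinite _)]
        · congr 1
          ext e
          constructor
          · rintro ⟨h1, h2⟩
            by_cases h3 : e ∈ G'.edgeSet
            · exact Or.inr ⟨h3, h2⟩
            · exact Or.inl ⟨h1, h3⟩
          · rintro (⟨h1, h2⟩ | ⟨h1, h2⟩)
            · exact ⟨h1, fun h => h2 (SimpleGraph.edgeSet_mono hHle h)⟩
            · exact ⟨SimpleGraph.edgeSet_mono hle h1, h2⟩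
        · rw [Set.disjoint_left]
          rintro e ⟨_, h2⟩ ⟨h3, _⟩
          exact h2 h3
      rw [hsplit]
      push_cast
      have := mul_le_mul_of_nonneg_left hpairs (le_of_lt hq)
      nlinarith [hHdel, hdel, mul_le_mul_of_nonneg_left hpairs hq.le]

/-- From every graph `G` on `n` vertices one can delete at most `q·n²` edges
to obtain a spanning subgraph all of whose connected components (as induced subgraphs)
are `q`-cut-dense. -/
theorem stmt9 {V : Type} [Fintype V] (G : SimpleGraph V) (q : ℝ) (hq : 0 < q) :
    ∃ H : SimpleGraph V, H ≤ G ∧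
      ((G.edgeSet \ H.edgeSet).ncard : ℝ) ≤ q * (Fintype.card V : ℝ) ^ 2 ∧
      ∀ c : H.ConnectedComponent, CutDense (H.induce c.supp) q := by
  obtain ⟨H, hle, hdel, hcomp⟩ := main_ind q hq G.edgeSet.ncard G le_rfl
  refine ⟨H, hle, ?_, hcomp⟩
  refine hdel.trans ?_
  have h1 : (pairsConn G).ncard ≤ Fintype.card V ^ 2 := by
    have := Set.ncard_le_ncard (Set.subset_univ (pairsConn G)) (Set.toFinite _)
    rwa [Set.ncard_univ, Nat.card_prod, Nat.card_eq_fintype_card, ← sq] at this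
  have h1' : ((pairsConn G).ncard : ℝ) ≤ ((Fintype.card V : ℝ)) ^ 2 := by exact_mod_cast h1
  exact mul_le_mul_of_nonneg_left h1' hq.le
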